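/- Define p¹(t) = (1 − (2/3)e^{−t}, e^{−t}/3, e^{−t}/3, 0) and p²(t) = (1 − e^{−t} + e^{−2t}/3, e^{−t}(1 − (2/3)e^{−t}), 0, e^{−2t}/3). Then for all t > 0: p¹₁(t) > p²₁(t), but p¹₁(t) + p¹₂(t) < p²₁(t) + p²₂(t). Consequently neither of the decreasingly-sorted vectors p¹(t), p²(t) majorizes the other. -/

import Mathlib

lemma fin4_forall (P : Fin 4 → Prop) (h0 : P 0) (h1 : P 1) (h2 : P 2) (h3 : P 3) :
    ∀ i, P i := by
  intro i
  fin_cases i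
  exacts [h0, h1, h2, h3]

lemma top_helper (p q : Fin 4 → ℝ) (σ : Equiv.Perm (Fin 4)) (hq : q = p ∘ σ)
    (hanti : Antitone q)
    (hmax : ∀ i, p i ≤ p 0)
    (hpair : ∀ i j : Fin 4, i ≠ j → p i + p j ≤ p 0 + p 1) :
    q 0 = p 0 ∧ q 0 + q 1 = p 0 + p 1 := by
  have h0 : q 0 = p 0 := by
    refine le_antisymm ?_ ?_
    · rw [hq]; exact hmax (σ 0)
    · have := hanti (Fin.zero_le (σ.symm 0))
      rw [hq] at this ⊢
      simpa using this
  refine ⟨h0, le_antisymm ?_ ?_⟩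
  · rw [hq]
    exact hpair (σ 0) (σ 1) (fun h => by simpa using σ.injective h)
  · set a := σ.symm 0 with ha
    set b := σ.symm 1 with hb
    have hab : a ≠ b := fun h => by
      have := congrArg σ h; simp [ha, hb] at this
    have hqa : q a = p 0 := by rw [hq]; simp [ha]
    have hqb : q b = p 1 := by rw [hq]; simp [hb]
    rcases lt_or_gt_of_ne hab with h | h
    · have h1 : (1 : Fin 4) ≤ b := by omega
      linarith [hanti (Fin.zero_le a), hanti h1, hqa, hqb]
    · have h1 : (1 : Fin 4) ≤ a := by omega
      linarith [hanti (Fin.zero_le b), hanti h1, hqa, hqb]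

set_option maxHeartbeats 1000000 in
theorem no_majorization_multistep_jumps (t : ℝ) (ht : 0 < t)
    (p1 p2 : Fin 4 → ℝ)
    (hp1 : p1 = ![1 - (2 / 3) * Real.exp (-t), Real.exp (-t) / 3, Real.exp (-t) / 3, 0])
    (hp2 : p2 = ![1 - Real.exp (-t) + Real.exp (-2 * t) / 3,
      Real.exp (-t) * (1 - (2 / 3) * Real.exp (-t)), 0, Real.exp (-2 * t) / 3]) :
    p2 0 < p1 0 ∧ p1 0 + p1 1 < p2 0 + p2 1 ∧
    ∀ q1 q2 : Fin 4 → ℝ, Antitone q1 → Antitone q2 →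
      (∃ σ : Equiv.Perm (Fin 4), q1 = p1 ∘ σ) →
      (∃ σ : Equiv.Perm (Fin 4), q2 = p2 ∘ σ) →
      (¬ ∀ n : ℕ, n ≤ 4 →
          ∑ i ∈ Finset.univ.filter (fun i : Fin 4 => (i : ℕ) < n), q2 i ≤
            ∑ i ∈ Finset.univ.filter (fun i : Fin 4 => (i : ℕ) < n), q1 i) ∧
      (¬ ∀ n : ℕ, n ≤ 4 →
          ∑ i ∈ Finset.univ.filter (fun i : Fin 4 => (i : ℕ) < n), q1 i ≤
            ∑ i ∈ Finset.univ.filter (fun i : Fin 4 => (i : ℕ) < n), q2 i) := by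
  have hx2 : Real.exp (-2 * t) = Real.exp (-t) * Real.exp (-t) := by
    rw [← Real.exp_add]; ring_nf
  have hx0 : 0 < Real.exp (-t) := Real.exp_pos _
  have hx1 : Real.exp (-t) < 1 := Real.exp_lt_one_iff.mpr (by linarith)
  have e0 : p1 0 = 1 - 2/3 * Real.exp (-t) := by rw [hp1]; norm_num
  have e1 : p1 1 = Real.exp (-t) / 3 := by rw [hp1]; norm_num
  have e2 : p1 2 = Real.exp (-t) / 3 := by rw [hp1]; norm_num; rfl
  have e3 : p1 3 = 0 := by rw [hp1]; norm_num; rfl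
  have f0 : p2 0 = 1 - Real.exp (-t) + Real.exp (-t) * Real.exp (-t) / 3 := by
    rw [hp2]; simp only [Matrix.cons_val_zero]; rw [hx2]
  have f1 : p2 1 = Real.exp (-t) * (1 - 2/3 * Real.exp (-t)) := by rw [hp2]; norm_num
  have f2 : p2 2 = 0 := by rw [hp2]; norm_num; rfl
  have hx2' : Real.exp (-(2 * t)) = Real.exp (-t) * Real.exp (-t) := by
    rw [show -(2 * t) = -2 * t by ring, hx2]
  have f3 : p2 3 = Real.exp (-t) * Real.exp (-t) / 3 := by
    rw [hp2]; simp; rw [hx2']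
  have hA : p2 0 < p1 0 := by rw [e0, f0]; nlinarith
  have hB : p1 0 + p1 1 < p2 0 + p2 1 := by rw [e0, e1, f0, f1]; nlinarith
  refine ⟨hA, hB, ?_⟩
  rintro q1 q2 ha1 ha2 ⟨σ1, hq1⟩ ⟨σ2, hq2⟩
  have hmax1 : ∀ i, p1 i ≤ p1 0 :=
    fin4_forall _ le_rfl (by rw [e0, e1]; nlinarith) (by rw [e0, e2]; nlinarith)
      (by rw [e0, e3]; nlinarith)
  have hmax2 : ∀ i, p2 i ≤ p2 0 :=
    fin4_forall _ le_rfl (by rw [f0, f1]; nlinarith) (by rw [f0, f2]; nlinarith)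
      (by rw [f0, f3]; nlinarith)
  have hpair1 : ∀ i j : Fin 4, i ≠ j → p1 i + p1 j ≤ p1 0 + p1 1 := by
    refine fin4_forall _ ?_ ?_ ?_ ?_ <;>
      refine fin4_forall _ ?_ ?_ ?_ ?_ <;> intro hij <;>
        first
          | exact absurd rfl hij
          | (simp only [e0, e1, e2, e3]; nlinarith)
  have hpair2 : ∀ i j : Fin 4, i ≠ j → p2 i + p2 j ≤ p2 0 + p2 1 := by
    refine fin4_forall _ ?_ ?_ ?_ ?_ <;>
      refine fin4_forall _ ?_ ?_ ?_ ?_ <;> intro hij <;>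
        first
          | exact absurd rfl hij
          | (simp only [f0, f1, f2, f3]; nlinarith)
  obtain ⟨hq10, hq101⟩ := top_helper p1 q1 σ1 hq1 ha1 hmax1 hpair1
  obtain ⟨hq20, hq201⟩ := top_helper p2 q2 σ2 hq2 ha2 hmax2 hpair2
  have hfilt1 : ∀ q : Fin 4 → ℝ,
      ∑ i ∈ Finset.univ.filter (fun i : Fin 4 => (i : ℕ) < 1), q i = q 0 := by
    intro q
    rw [Finset.sum_filter, Fin.sum_univ_four]
    norm_num
  have hfilt2 : ∀ q : Fin 4 → ℝ,
      ∑ i ∈ Finset.univ.filter (fun i : Fin 4 => (i : ℕ) < 2), q i = q 0 + q 1 := by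
    intro q
    rw [Finset.sum_filter, Fin.sum_univ_four]
    norm_num
  constructor
  · intro h
    have := h 2 (by norm_num)
    rw [hfilt2, hfilt2, hq101, hq201] at this
    linarith
  · intro h
    have := h 1 (by norm_num)
    rw [hfilt1, hfilt1, hq10, hq20] at this
    linarith
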